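/- Let n ≥ 2, let Fₙ be the free group on x₁, ..., xₙ, let r = x₁²x₂²···xₙ², and let R be the normal closure of r in Fₙ. Then the endomorphism φ of Fₙ determined by φ(x₁) = x₁·(x₁⁻²r⁻¹x₁²) = x₁⁻¹·xₙ⁻²·xₙ₋₁⁻²···x₂⁻² and φ(xᵢ) = xᵢ for i ≠ 1 is an automorphism of Fₙ; it is not an inner automorphism; it satisfies φ(R) = R; and it induces the identity automorphism of Fₙ/R, i.e., w⁻¹·φ(w) ∈ R for every w ∈ Fₙ. -/
import Mathlib


/-- The word r = x₁²x₂²⋯xₙ² in the free group of rank n. -/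
def rNonor (n : ℕ) : FreeGroup (Fin n) :=
  (List.ofFn fun i : Fin n => FreeGroup.of i ^ 2).prod

/-- for n ≥ 2, r = x₁²x₂²⋯xₙ² and R the normal closure of r, the
endomorphism φ of Fₙ with φ(x₁) = x₁·(x₁⁻²r⁻¹x₁²) and φ(xᵢ) = xᵢ for i ≠ 1 is a
non-inner automorphism of Fₙ which stabilizes R and induces the identity
automorphism of Fₙ/R. -/
theorem stmt6 (n : ℕ) (hn : 2 ≤ n)
    (φ : FreeGroup (Fin n) →* FreeGroup (Fin n))
    (hφ1 : φ (FreeGroup.of ⟨0, by omega⟩) =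
      FreeGroup.of ⟨0, by omega⟩ *
        ((FreeGroup.of (⟨0, by omega⟩ : Fin n)) ^ 2)⁻¹ * (rNonor n)⁻¹ *
        (FreeGroup.of (⟨0, by omega⟩ : Fin n)) ^ 2)
    (hφi : ∀ i : Fin n, i ≠ ⟨0, by omega⟩ → φ (FreeGroup.of i) = FreeGroup.of i) :
    Function.Bijective φ ∧
    (¬ ∃ g : FreeGroup (Fin n), ∀ w : FreeGroup (Fin n), φ w = g * w * g⁻¹) ∧
    Subgroup.map φ (Subgroup.normalClosure {rNonor n}) =
      Subgroup.normalClosure {rNonor n} ∧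
    (∀ w : FreeGroup (Fin n), w⁻¹ * φ w ∈ Subgroup.normalClosure {rNonor n}) := by
  obtain ⟨m, rfl⟩ : ∃ m, n = m + 2 := ⟨n - 2, by omega⟩
  have h00 : (⟨0, by omega⟩ : Fin (m+2)) = 0 := by ext; simp
  rw [h00] at hφ1
  simp only [h00] at hφi
  set a : FreeGroup (Fin (m+2)) := FreeGroup.of (0 : Fin (m+2)) with ha
  set t : FreeGroup (Fin (m+2)) :=
    (List.ofFn fun i : Fin (m+1) => FreeGroup.of i.succ ^ 2).prod with ht
  have hr : rNonor (m+2) = a ^ 2 * t := by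
    rw [rNonor, List.ofFn_succ, List.prod_cons]
  -- any endomorphism fixing all generators except 0 fixes t
  have hfix : ∀ (g : FreeGroup (Fin (m+2)) →* FreeGroup (Fin (m+2))),
      (∀ i : Fin (m+2), i ≠ 0 → g (FreeGroup.of i) = FreeGroup.of i) → g t = t := by
    intro g hg
    rw [ht, map_list_prod, List.map_ofFn]
    have he : (⇑g ∘ fun i : Fin (m+1) => FreeGroup.of i.succ ^ 2)
        = fun i : Fin (m+1) => FreeGroup.of i.succ ^ 2 := by
      funext i
      simp only [Function.comp_apply]
      rw [map_pow, hg _ (Fin.succ_ne_zero i)]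
    rw [he]
  have hφ0 : φ a = a⁻¹ * t⁻¹ := by rw [hφ1, hr]; group
  have hφt : φ t = t := hfix φ hφi
  have hφr : φ (rNonor (m+2)) = a⁻¹ * (rNonor (m+2))⁻¹ * a := by
    rw [hr, map_mul, map_pow, hφ0, hφt, pow_two]; group
  -- the inverse homomorphism
  set ψ : FreeGroup (Fin (m+2)) →* FreeGroup (Fin (m+2)) :=
    FreeGroup.lift (fun i : Fin (m+2) =>
      if i = 0 then (rNonor (m+2))⁻¹ * FreeGroup.of (0 : Fin (m+2))
        else FreeGroup.of i) with hψdef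
  have hψ0 : ψ a = (rNonor (m+2))⁻¹ * a := by
    rw [ha, hψdef, FreeGroup.lift_apply_of, if_pos rfl]
  have hψi : ∀ i : Fin (m+2), i ≠ 0 → ψ (FreeGroup.of i) = FreeGroup.of i := by
    intro i hi
    rw [hψdef, FreeGroup.lift_apply_of, if_neg hi]
  have hψt : ψ t = t := hfix ψ hψi
  have hψφ : ψ.comp φ = MonoidHom.id _ := by
    apply FreeGroup.ext_hom
    intro i
    rcases eq_or_ne i 0 with rfl | hi
    · show ψ (φ a) = a
      rw [hφ0, map_mul, map_inv, map_inv, hψ0, hψt, hr]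
      group
    · show ψ (φ (FreeGroup.of i)) = FreeGroup.of i
      rw [hφi i hi, hψi i hi]
  have hφψ : φ.comp ψ = MonoidHom.id _ := by
    apply FreeGroup.ext_hom
    intro i
    rcases eq_or_ne i 0 with rfl | hi
    · show φ (ψ a) = a
      rw [hψ0, map_mul, map_inv, hφr, hφ0, hr]
      group
    · show φ (ψ (FreeGroup.of i)) = FreeGroup.of i
      rw [hψi i hi, hφi i hi]
  have hli : Function.LeftInverse ψ φ := fun x => DFunLike.congr_fun hψφ x
  have hri : Function.RightInverse ψ φ := fun x => DFunLike.congr_fun hφψ x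
  have hbij : Function.Bijective φ := ⟨hli.injective, hri.surjective⟩
  -- membership facts
  have hrR : rNonor (m+2) ∈ Subgroup.normalClosure {rNonor (m+2)} :=
    Subgroup.subset_normalClosure rfl
  refine ⟨hbij, ?_, ?_, ?_⟩
  · -- not inner
    rintro ⟨g, hg⟩
    set χ : FreeGroup (Fin (m+2)) →* Multiplicative ℤ :=
      FreeGroup.lift (fun i : Fin (m+2) =>
        if i = 0 then Multiplicative.ofAdd (1 : ℤ) else 1) with hχdef
    have hχa : χ a = Multiplicative.ofAdd (1 : ℤ) := by
      rw [ha, hχdef, FreeGroup.lift_apply_of, if_pos rfl]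
    have hχt : χ t = 1 := by
      rw [ht, map_list_prod, List.map_ofFn]
      have h1 : ∀ i : Fin (m+1), χ (FreeGroup.of i.succ ^ 2) = 1 := fun i => by
        rw [map_pow, hχdef, FreeGroup.lift_apply_of, if_neg (Fin.succ_ne_zero i), one_pow]
      simp [Function.comp_def, h1]
    have h1 : a⁻¹ * t⁻¹ = g * a * g⁻¹ := by rw [← hφ0]; exact hg a
    have h2 := congrArg χ h1
    simp only [map_mul, map_inv, hχa, hχt, inv_one, mul_one,
      mul_inv_cancel_comm] at h2
    exact absurd h2 (by decide)
  · -- map φ R = R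
    haveI hNc : (Subgroup.comap φ (Subgroup.normalClosure {rNonor (m+2)})).Normal :=
      Subgroup.Normal.comap inferInstance φ
    haveI hNm : (Subgroup.map φ (Subgroup.normalClosure {rNonor (m+2)})).Normal :=
      Subgroup.Normal.map inferInstance φ hri.surjective
    apply le_antisymm
    · rw [Subgroup.map_le_iff_le_comap]
      apply Subgroup.normalClosure_le_normal
      intro x hx
      rw [Set.mem_singleton_iff] at hx
      subst hx
      show φ (rNonor (m+2)) ∈ Subgroup.normalClosure {rNonor (m+2)}
      rw [hφr]
      have := (Subgroup.normalClosure_normal (s := {rNonor (m+2)})).conj_mem _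
        (inv_mem hrR) a⁻¹
      simpa using this
    · apply Subgroup.normalClosure_le_normal
      intro x hx
      rw [Set.mem_singleton_iff] at hx
      subst hx
      have hψr : ψ (rNonor (m+2)) =
          (rNonor (m+2))⁻¹ * (a * (rNonor (m+2))⁻¹ * a⁻¹) * rNonor (m+2) := by
        conv_lhs => rw [hr]
        rw [map_mul, map_pow, hψ0, hψt, hr, pow_two]
        group
      have hmem : ψ (rNonor (m+2)) ∈ Subgroup.normalClosure {rNonor (m+2)} := by
        rw [hψr]
        exact mul_mem (mul_mem (inv_mem hrR)
          ((Subgroup.normalClosure_normal).conj_mem _ (inv_mem hrR) a)) hrR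
      exact ⟨ψ (rNonor (m+2)), hmem, hri (rNonor (m+2))⟩
  · -- induces identity on quotient
    intro w
    set R := Subgroup.normalClosure {rNonor (m+2)} with hR
    set π : FreeGroup (Fin (m+2)) →* FreeGroup (Fin (m+2)) ⧸ R :=
      QuotientGroup.mk' R with hπdef
    have hπr : π (rNonor (m+2)) = 1 := (QuotientGroup.eq_one_iff _).mpr hrR
    have hπφ : π.comp φ = π := by
      apply FreeGroup.ext_hom
      intro i
      rcases eq_or_ne i 0 with rfl | hi
      · show π (φ a) = π a
        simp only [hφ1, map_mul, map_inv, map_pow, hπr]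
        group
      · show π (φ (FreeGroup.of i)) = π (FreeGroup.of i)
        rw [hφi i hi]
    have hw : π (φ w) = π w := DFunLike.congr_fun hπφ w
    have : π (w⁻¹ * φ w) = 1 := by rw [map_mul, map_inv, hw, inv_mul_cancel]
    exact (QuotientGroup.eq_one_iff _).mp this
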